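/- Assume the coefficients of R are such that R(x) = r is a constant (c_{−1} = 0, c_0 = r, c_k = 0 for k ≥ 1), that p is odd and δ > 0, and that P(x) > 0 and P'(x)/2 − Q(x) < 0 for all x ∈ (0, 1). If u is twice differentiable on [x₀, x₁) ⊆ (0, 1) and satisfies the perturbed Lane–Emden equation there, then the function H(x) := P(x)·u'(x)²/2 + (δ/(p+1))·u(x)^{p+1} + (r/2)·u(x)² satisfies H'(x) = (P'(x)/2 − Q(x))·u'(x)² on [x₀, x₁); in particular H is nonincreasing on [x₀, x₁), the infimum V := inf_{w ∈ ℝ} [ (δ/(p+1))·w^{p+1} + (r/2)·w² ] is finite, and P(x)·u'(x)² ≤ 2(H(x₀) − V) for all x ∈ [x₀, x₁). -/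

import Mathlib

set_option autoImplicit false

open Real Set

/-- The Lyapunov function for the perturbed Lane–Emden equation with constant `R(x) = r`:
`H(x) = P(x) u'(x)²/2 + (δ/(p+1)) u(x)^{p+1} + (r/2) u(x)²`. -/
noncomputable def perturbedH (p : ℕ) (δ r : ℝ) (P u : ℝ → ℝ) (x : ℝ) : ℝ :=
  P x * (deriv u x) ^ 2 / 2 + δ / ((p : ℝ) + 1) * u x ^ (p + 1) + r / 2 * (u x) ^ 2

/-- For the perturbed Lane–Emden equation with constant coefficient function
`R(x) = r`, odd `p`, `δ > 0`, `P > 0` and `P'/2 - Q < 0` on `(0,1)`: along a twice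
differentiable solution on `[x₀, x₁) ⊆ (0,1)` the Lyapunov function `H` satisfies
`H' = (P'/2 - Q) u'²`, `H` is nonincreasing, the potential infimum `V` is finite, and
`P(x) u'(x)² ≤ 2(H(x₀) - V)`. -/
theorem perturbedLaneEmden_lyapunov_bound
    (p : ℕ) (hp : 1 < p) (α δ r : ℝ) (hα : 0 < α) (hδ : 0 < δ)
    (hodd : Odd p)
    (n : ℕ) (a b c : ℤ → ℝ)
    (hc1 : c (-1) = 0) (hc0 : c 0 = r) (hck : ∀ k : ℤ, 1 ≤ k → c k = 0)
    (P Q : ℝ → ℝ)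
    (hP : P = fun x : ℝ => 1 + ∑ k ∈ Finset.Icc (-1 : ℤ) (n : ℤ), a k * x ^ (k + 2))
    (hQ : Q = fun x : ℝ => α / x + ∑ k ∈ Finset.Icc (-1 : ℤ) (n : ℤ), b k * x ^ (k + 1))
    (hPpos : ∀ x ∈ Ioo (0 : ℝ) 1, 0 < P x)
    (hPQ : ∀ x ∈ Ioo (0 : ℝ) 1, deriv P x / 2 - Q x < 0)
    (x₀ x₁ : ℝ) (hx : Ico x₀ x₁ ⊆ Ioo (0 : ℝ) 1)
    (u : ℝ → ℝ)
    (hdiff : ∀ x ∈ Ico x₀ x₁, DifferentiableAt ℝ u x)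
    (hdiff2 : ∀ x ∈ Ico x₀ x₁, DifferentiableAt ℝ (deriv u) x)
    (heq : ∀ x ∈ Ico x₀ x₁,
      P x * deriv (deriv u) x + Q x * deriv u x
        + (∑ k ∈ Finset.Icc (-1 : ℤ) (n : ℤ), c k * x ^ k) * u x
        + δ * u x ^ p = 0) :
    (∀ x ∈ Ico x₀ x₁,
      HasDerivAt (perturbedH p δ r P u)
        ((deriv P x / 2 - Q x) * (deriv u x) ^ 2) x) ∧
    AntitoneOn (perturbedH p δ r P u) (Ico x₀ x₁) ∧
    BddBelow (Set.range fun w : ℝ => δ / ((p : ℝ) + 1) * w ^ (p + 1) + r / 2 * w ^ 2) ∧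
    ∀ x ∈ Ico x₀ x₁,
      P x * (deriv u x) ^ 2
        ≤ 2 * (perturbedH p δ r P u x₀
            - sInf (Set.range fun w : ℝ =>
                δ / ((p : ℝ) + 1) * w ^ (p + 1) + r / 2 * w ^ 2)) := by
  -- The sum in R is constantly r
  have hRsum : ∀ x : ℝ, (∑ k ∈ Finset.Icc (-1 : ℤ) (n : ℤ), c k * x ^ k) = r := by
    intro x
    rw [Finset.sum_eq_single_of_mem 0]
    · simp [hc0]
    · rw [Finset.mem_Icc]; constructor <;> omega
    · intro b hb hb0
      rcases lt_or_gt_of_ne hb0 with h | h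
      · have hb1 : b = -1 := by simp [Finset.mem_Icc] at hb; omega
        simp [hb1, hc1]
      · rw [hck b (by omega)]; ring
  have hPdiff : ∀ x : ℝ, x ≠ 0 → DifferentiableAt ℝ P x := by
    intro x hx0
    rw [hP]
    apply DifferentiableAt.add (differentiableAt_const _)
    apply DifferentiableAt.fun_sum
    intro k hk
    exact (differentiableAt_const _).mul (differentiableAt_zpow.mpr (Or.inl hx0))
  have key : ∀ x ∈ Ico x₀ x₁,
      HasDerivAt (perturbedH p δ r P u)
        ((deriv P x / 2 - Q x) * (deriv u x) ^ 2) x := by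
    intro x hxm
    have hxI := hx hxm
    have hx0 : x ≠ 0 := ne_of_gt hxI.1
    have hu : HasDerivAt u (deriv u x) x := (hdiff x hxm).hasDerivAt
    have hu' : HasDerivAt (deriv u) (deriv (deriv u) x) x := (hdiff2 x hxm).hasDerivAt
    have hPd : HasDerivAt P (deriv P x) x := (hPdiff x hx0).hasDerivAt
    have h1 := (hPd.mul (hu'.pow 2)).div_const 2
    have h2 := (hu.pow (p + 1)).const_mul (δ / ((p : ℝ) + 1))
    have h3 := (hu.pow 2).const_mul (r / 2)
    have total := (h1.add h2).add h3
    have hfun : perturbedH p δ r P u = fun y =>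
        P y * (deriv u y) ^ 2 / 2 + δ / ((p : ℝ) + 1) * u y ^ (p + 1) + r / 2 * u y ^ 2 := rfl
    rw [hfun]
    refine total.congr_deriv ?_
    have heqx := heq x hxm
    rw [hRsum] at heqx
    have hp1 : ((p : ℝ) + 1) ≠ 0 := by positivity
    have hK : δ / ((p : ℝ) + 1) * ((p : ℝ) + 1) = δ := div_mul_cancel₀ _ hp1
    norm_num only [Pi.pow_apply, Nat.add_sub_cancel]
    push_cast
    linear_combination (deriv u x) * heqx + (u x ^ p * deriv u x) * hK
  have cont : ContinuousOn (perturbedH p δ r P u) (Ico x₀ x₁) :=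
    fun x hxm => ((key x hxm).differentiableAt.continuousAt).continuousWithinAt
  have anti : AntitoneOn (perturbedH p δ r P u) (Ico x₀ x₁) := by
    apply antitoneOn_of_deriv_nonpos (convex_Ico _ _) cont
    · intro x hxi
      rw [interior_Ico] at hxi
      exact (key x (Ioo_subset_Ico_self hxi)).differentiableAt.differentiableWithinAt
    · intro x hxi
      rw [interior_Ico] at hxi
      have hxm := Ioo_subset_Ico_self hxi
      rw [(key x hxm).deriv]
      have hneg := hPQ x (hx hxm)
      nlinarith [sq_nonneg (deriv u x)]
  obtain ⟨m, hm⟩ := hodd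
  have hm1 : 1 ≤ m := by omega
  set A : ℝ := δ / ((p : ℝ) + 1) with hA
  have hApos : 0 < A := by positivity
  set B : ℝ := r / 2 with hB
  set C : ℝ := -(|B| * (|B| / A + 1)) with hC
  have hbdd : ∀ w : ℝ, C ≤ A * w ^ (p + 1) + B * w ^ 2 := by
    intro w
    have hq : p + 1 = 2 * (m + 1) := by omega
    have hw : w ^ (p + 1) = (w ^ 2) ^ (m + 1) := by rw [hq, pow_mul]
    set s : ℝ := w ^ 2 with hs
    have hs0 : 0 ≤ s := sq_nonneg w
    rw [hw]
    by_cases hcase : s ≤ |B| / A + 1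
    · have h1 : 0 ≤ A * s ^ (m + 1) := by positivity
      have h2 : |B * s| ≤ |B| * (|B| / A + 1) := by
        rw [abs_mul]
        exact mul_le_mul_of_nonneg_left (by rwa [abs_of_nonneg hs0]) (abs_nonneg B)
      have h3 := neg_abs_le (B * s)
      simp only [hC]
      linarith
    · push_neg at hcase
      have hs1 : 1 ≤ s := by
        have h0 : (0:ℝ) ≤ |B| / A := by positivity
        linarith
      have h1 : |B| / A + 1 ≤ s ^ m :=
        le_trans hcase.le (le_self_pow₀ hs1 (by omega))
      have h2 : A * ((|B| / A + 1) * s) ≤ A * (s ^ m * s) :=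
        mul_le_mul_of_nonneg_left (mul_le_mul_of_nonneg_right h1 hs0) hApos.le
      have e1 : A * ((|B| / A + 1) * s) = |B| * s + A * s := by
        field_simp
      have e2 : A * (s ^ m * s) = A * s ^ (m + 1) := by ring
      rw [e1, e2] at h2
      have h8 : -|B| * s ≤ B * s := mul_le_mul_of_nonneg_right (neg_abs_le B) hs0
      have h9 : 0 ≤ A * s := mul_nonneg hApos.le hs0
      have h6 : C ≤ 0 := neg_nonpos.mpr (by positivity)
      linarith
  have hbddBelow : BddBelow (Set.range fun w : ℝ =>
      δ / ((p : ℝ) + 1) * w ^ (p + 1) + r / 2 * w ^ 2) := by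
    refine ⟨C, ?_⟩
    rintro y ⟨w, rfl⟩
    exact hbdd w
  refine ⟨key, anti, hbddBelow, ?_⟩
  intro x hxm
  have hx01 : x₀ ∈ Ico x₀ x₁ := ⟨le_refl _, lt_of_le_of_lt hxm.1 hxm.2⟩
  have hHle : perturbedH p δ r P u x ≤ perturbedH p δ r P u x₀ := anti hx01 hxm hxm.1
  have hV : sInf (Set.range fun w : ℝ =>
        δ / ((p : ℝ) + 1) * w ^ (p + 1) + r / 2 * w ^ 2)
      ≤ δ / ((p : ℝ) + 1) * u x ^ (p + 1) + r / 2 * u x ^ 2 :=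
    csInf_le hbddBelow ⟨u x, rfl⟩
  have hHx : perturbedH p δ r P u x
      = P x * (deriv u x) ^ 2 / 2 + δ / ((p : ℝ) + 1) * u x ^ (p + 1) + r / 2 * u x ^ 2 := rfl
  linarith
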